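/- arXiv:2412.07118 — 2 statements merged into one kernel-verified Lean document; each statement's English description precedes it below -/
import Mathlib

section
/- For 1 ≤ k ≤ n−1, the null space of the codifferential δ_k on Q_1^{*,-}Λ^k equals the range of δ_{k+1} applied to Q_1^{*,-}Λ^{k+1}. -/
open MvPolynomial Finset MeasureTheory

/-- Strictly increasing `k`-indices in `{1,…,n}`, modelled as `k`-element subsets of `Fin n`. -/
abbrev Idx (n k : ℕ) := {s : Finset (Fin n) // s.card = k}

/-- A differential `k`-form with polynomial coefficients on `ℝⁿ`:
one polynomial coefficient for each increasing `k`-index. -/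
abbrev Form (n k : ℕ) := Idx n k → MvPolynomial (Fin n) ℝ

/-- The sign `(-1)^{#\{j ∈ s : j < i\}}`. -/
noncomputable def sgn {n : ℕ} (s : Finset (Fin n)) (i : Fin n) : ℝ :=
  (-1) ^ (s.filter (· < i)).card

def eraseIdx {n k : ℕ} (s : Idx n (k+1)) {i : Fin n} (hi : i ∈ s.1) : Idx n k :=
  ⟨s.1.erase i, by simp [Finset.card_erase_of_mem hi, s.2]⟩

def insertIdx {n k : ℕ} (s : Idx n k) {i : Fin n} (hi : i ∉ s.1) : Idx n (k+1) :=
  ⟨insert i s.1, by simp [Finset.card_insert_of_notMem hi, s.2]⟩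

/-- The exterior derivative `d^k`. -/
noncomputable def extd (n k : ℕ) : Form n k →ₗ[ℝ] Form n (k+1) where
  toFun ω := fun s => ∑ i ∈ s.1.attach, sgn s.1 i.1 • pderiv i.1 (ω (eraseIdx s i.2))
  map_add' ω η := by
    funext s
    simp [Finset.sum_add_distrib, smul_add]
  map_smul' c ω := by
    funext s
    simp only [Pi.smul_apply, RingHom.id_apply]
    rw [Finset.smul_sum]
    exact Finset.sum_congr rfl (fun i _ => by rw [(pderiv i.1).map_smul, smul_comm])

/-- The Koszul operator `κ` (contraction with the position vector field). -/
noncomputable def koszul (n k : ℕ) : Form n (k+1) →ₗ[ℝ] Form n k where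
  toFun ω := fun s =>
    ∑ i ∈ (s.1ᶜ).attach, sgn s.1 i.1 • (X i.1 * ω (insertIdx s (Finset.mem_compl.mp i.2)))
  map_add' ω η := by
    funext s
    simp [Finset.sum_add_distrib, mul_add, smul_add]
  map_smul' c ω := by
    funext s
    simp only [Pi.smul_apply, RingHom.id_apply, mul_smul_comm]
    rw [Finset.smul_sum]
    exact Finset.sum_congr rfl (fun i _ => (smul_comm _ _ _))

/-- The codifferential `δ_{k+1}` (the formal adjoint of `d^k` on Euclidean `ℝⁿ`,
which coincides with `(-1)^{(k+1)n} ⋆ d^{n-k-1} ⋆`). -/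
noncomputable def codiff (n k : ℕ) : Form n (k+1) →ₗ[ℝ] Form n k where
  toFun ω := fun s =>
    -∑ i ∈ (s.1ᶜ).attach, sgn s.1 i.1 • pderiv i.1 (ω (insertIdx s (Finset.mem_compl.mp i.2)))
  map_add' ω η := by
    funext s
    simp [Finset.sum_add_distrib, smul_add]
    ring
  map_smul' c ω := by
    funext s
    simp only [Pi.smul_apply, RingHom.id_apply, smul_neg, neg_inj]
    rw [Finset.smul_sum]
    exact Finset.sum_congr rfl (fun i _ => by rw [(pderiv i.1).map_smul, smul_comm])

/-- The operator `κ^δ = ⋆ ∘ κ ∘ ⋆` (exterior multiplication by `Σ xᵢ dxⁱ`, up to sign). -/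
noncomputable def kappaDelta (n k : ℕ) : Form n k →ₗ[ℝ] Form n (k+1) where
  toFun ω := fun s => ∑ i ∈ s.1.attach, sgn s.1 i.1 • (X i.1 * ω (eraseIdx s i.2))
  map_add' ω η := by
    funext s
    simp [Finset.sum_add_distrib, mul_add, smul_add]
  map_smul' c ω := by
    funext s
    simp only [Pi.smul_apply, RingHom.id_apply, mul_smul_comm]
    rw [Finset.smul_sum]
    exact Finset.sum_congr rfl (fun i _ => (smul_comm _ _ _))

/-- Sign of the permutation `(t, tᶜ) ↦ (1,…,n)`, i.e. `⋆ dx^t = starSign t · dx^{tᶜ}`. -/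
noncomputable def starSign {n : ℕ} (t : Finset (Fin n)) : ℝ :=
  (-1) ^ (∑ i ∈ t, ((tᶜ).filter (· < i)).card)

/-- The Hodge star operator on `k`-forms on `ℝⁿ`, `k + l = n`. -/
noncomputable def hodge (n k l : ℕ) (h : k + l = n) : Form n k →ₗ[ℝ] Form n l where
  toFun ω := fun s => starSign (s.1ᶜ) •
    ω ⟨s.1ᶜ, by rw [Finset.card_compl, s.2, Fintype.card_fin]; omega⟩
  map_add' ω η := by funext s; simp [smul_add]
  map_smul' c ω := by funext s; simp only [Pi.smul_apply, RingHom.id_apply]; rw [smul_comm]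

/-- The monomial form `x_τ dx^σ`. -/
noncomputable def monForm (n k : ℕ) (τ : Finset (Fin n)) (σ : Idx n k) : Form n k :=
  fun s => if s = σ then ∏ i ∈ τ, X i else 0

/-- `Q_1^-Λ^k = span{ x_τ dx^σ : |σ| = k, 0 ≤ |τ| ≤ n-k, τ ⊆ σᶜ }`. -/
noncomputable def Qm (n k : ℕ) : Submodule ℝ (Form n k) :=
  Submodule.span ℝ
    {ω | ∃ (τ : Finset (Fin n)) (σ : Idx n k), τ.card ≤ n - k ∧ τ ⊆ (σ.1)ᶜ ∧ ω = monForm n k τ σ}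

/-- `Q_1^{*,-}Λ^k = span{ x_τ' dx^σ' : |σ'| = k, 0 ≤ |τ'| ≤ k, τ' ⊆ σ' }`. -/
noncomputable def Qs (n k : ℕ) : Submodule ℝ (Form n k) :=
  Submodule.span ℝ
    {ω | ∃ (τ : Finset (Fin n)) (σ : Idx n k), τ.card ≤ k ∧ τ ⊆ σ.1 ∧ ω = monForm n k τ σ}

/-- `P_0Λ^k`: forms with constant coefficients. -/
noncomputable def P0 (n k : ℕ) : Submodule ℝ (Form n k) :=
  Submodule.span ℝ {ω | ∃ σ : Idx n k, ω = monForm n k ∅ σ}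

/-- The Whitney space `P_1^-Λ^k = P_0Λ^k + κ(P_0Λ^{k+1})`. -/
noncomputable def Pm (n k : ℕ) : Submodule ℝ (Form n k) :=
  P0 n k ⊔ Submodule.map (koszul n k) (P0 n (k+1))

/-- The star Whitney space `P_1^{*,-}Λ^{k+1} = P_0Λ^{k+1} + κ^δ(P_0Λ^k)`. -/
noncomputable def PsS (n k : ℕ) : Submodule ℝ (Form n (k+1)) :=
  P0 n (k+1) ⊔ Submodule.map (kappaDelta n k) (P0 n k)

/-- `L²` inner product of `k`-forms on the centered box `[-r, r]`. -/
noncomputable def binner (n k : ℕ) (r : Fin n → ℝ) (ω η : Form n k) : ℝ :=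
  ∑ s : Idx n k, ∫ x in Set.Icc (fun i => -(r i)) r, eval x (ω s * η s)

/-- `L²` inner product of `k`-forms on the reference cube `T = [-1,1]ⁿ`. -/
noncomputable def finner (n k : ℕ) (ω η : Form n k) : ℝ :=
  binner n k (fun _ => (1 : ℝ)) ω η

section AuxDev

open Finset MvPolynomial

/-! ### Extension of a form to all finsets -/

noncomputable def exf {n m : ℕ} (ω : Form n m) (t : Finset (Fin n)) : MvPolynomial (Fin n) ℝ :=
  if h : t.card = m then ω ⟨t, h⟩ else 0

lemma exf_eq {n m : ℕ} (ω : Form n m) {t : Finset (Fin n)} (h : t.card = m) :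
    exf ω t = ω ⟨t, h⟩ := dif_pos h

lemma exf_ne {n m : ℕ} (ω : Form n m) {t : Finset (Fin n)} (h : t.card ≠ m) :
    exf ω t = 0 := dif_neg h

/-! ### Sign lemmas -/

lemma sgn_mul_self {n : ℕ} (t : Finset (Fin n)) (i : Fin n) : sgn t i * sgn t i = 1 := by
  rw [sgn, ← mul_pow]; norm_num

lemma sgn_erase {n : ℕ} {t : Finset (Fin n)} {i : Fin n} (hi : i ∈ t) (j : Fin n) :
    sgn (t.erase i) j = (if i < j then (-1 : ℝ) else 1) * sgn t j := by
  rw [sgn, sgn, Finset.filter_erase]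
  by_cases h : i < j
  · have hmem : i ∈ Finset.filter (fun x => x < j) t := Finset.mem_filter.mpr ⟨hi, h⟩
    rw [if_pos h, Finset.card_erase_of_mem hmem]
    have hc : (Finset.filter (fun x => x < j) t).card ≠ 0 :=
      Finset.card_ne_zero_of_mem hmem
    obtain ⟨c, hc'⟩ : ∃ c, (Finset.filter (fun x => x < j) t).card = c + 1 :=
      ⟨_, (Nat.succ_pred_eq_of_pos (Nat.pos_of_ne_zero hc)).symm⟩
    rw [hc', Nat.add_sub_cancel, pow_succ]
    ring
  · have hmem : i ∉ Finset.filter (fun x => x < j) t :=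
      fun hc => h (Finset.mem_filter.mp hc).2
    rw [if_neg h, Finset.erase_eq_of_notMem hmem, one_mul]

lemma sgn_insert {n : ℕ} {t : Finset (Fin n)} {j : Fin n} (hj : j ∉ t) (i : Fin n) :
    sgn (insert j t) i = (if j < i then (-1 : ℝ) else 1) * sgn t i := by
  rw [sgn, sgn, Finset.filter_insert]
  by_cases h : j < i
  · rw [if_pos h, if_pos h,
      Finset.card_insert_of_notMem (fun hc => hj (Finset.mem_filter.mp hc).1)]
    rw [pow_succ]; ring
  · rw [if_neg h, if_neg h, one_mul]

lemma sgn_erase_self {n : ℕ} {t : Finset (Fin n)} {i : Fin n} (hi : i ∈ t) :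
    sgn (t.erase i) i = sgn t i := by
  rw [sgn_erase hi i, if_neg (lt_irrefl i), one_mul]

lemma sgn_insert_self {n : ℕ} {t : Finset (Fin n)} {j : Fin n} (hj : j ∉ t) :
    sgn (insert j t) j = sgn t j := by
  rw [sgn_insert hj j, if_neg (lt_irrefl j), one_mul]

lemma sgn_cross {n : ℕ} {t : Finset (Fin n)} {i j : Fin n} (hi : i ∈ t) (hj : j ∉ t)
    (hij : i ≠ j) :
    sgn t i * sgn (t.erase i) j + sgn t j * sgn (insert j t) i = 0 := by
  rw [sgn_erase hi j, sgn_insert hj i]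
  rcases hij.lt_or_gt with h | h
  · rw [if_pos h, if_neg (asymm h)]; ring
  · rw [if_neg (asymm h), if_pos h]; ring

lemma sgn_cross' {n : ℕ} {t : Finset (Fin n)} {i j : Fin n} (hi : i ∉ t) (hj : j ∉ t)
    (hij : i ≠ j) :
    sgn t j * sgn (insert j t) i + sgn t i * sgn (insert i t) j = 0 := by
  rw [sgn_insert hj i, sgn_insert hi j]
  rcases hij.lt_or_gt with h | h
  · rw [if_pos h, if_neg (asymm h)]; ring
  · rw [if_neg (asymm h), if_pos h]; ring

/-! ### Polynomial lemmas -/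

lemma pderiv_comm' {n : ℕ} (i j : Fin n) (p : MvPolynomial (Fin n) ℝ) :
    pderiv i (pderiv j p) = pderiv j (pderiv i p) := by
  induction p using MvPolynomial.induction_on' with
  | monomial d c =>
    simp only [pderiv_monomial]
    by_cases h : i = j
    · subst h; rfl
    · have h1 : ((d - Finsupp.single j 1 : Fin n →₀ ℕ)) i = d i := by
        rw [Finsupp.tsub_apply, Finsupp.single_apply, if_neg (Ne.symm h)]
        simp
      have h2 : ((d - Finsupp.single i 1 : Fin n →₀ ℕ)) j = d j := by
        rw [Finsupp.tsub_apply, Finsupp.single_apply, if_neg h]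
        simp
      have hs : d - Finsupp.single j 1 - Finsupp.single i 1
          = d - Finsupp.single i 1 - Finsupp.single j 1 := by
        ext a; simp only [Finsupp.tsub_apply]; omega
      rw [h1, h2, hs]; ring_nf
  | add p q hp hq => simp [hp, hq]

noncomputable def eulerP {n : ℕ} : MvPolynomial (Fin n) ℝ →ₗ[ℝ] MvPolynomial (Fin n) ℝ where
  toFun p := ∑ i, X i * pderiv i p
  map_add' p q := by simp [mul_add, Finset.sum_add_distrib]
  map_smul' c p := by simp [Finset.smul_sum, mul_smul_comm]

lemma eulerP_apply {n : ℕ} (p : MvPolynomial (Fin n) ℝ) :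
    eulerP p = ∑ i, X i * pderiv i p := rfl

lemma X_mul_pderiv_monomial {n : ℕ} (i : Fin n) (d : Fin n →₀ ℕ) (c : ℝ) :
    (X i : MvPolynomial (Fin n) ℝ) * pderiv i (monomial d c) = ((d i : ℝ)) • monomial d c := by
  rw [pderiv_monomial]
  by_cases h : d i = 0
  · simp [h]
  · rw [X, monomial_mul, smul_monomial]
    have hd : Finsupp.single i 1 + (d - Finsupp.single i 1) = d := by
      ext a
      simp only [Finsupp.add_apply, Finsupp.tsub_apply, Finsupp.single_apply]
      by_cases ha : i = a
      · subst ha; rw [if_pos rfl]; omega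
      · rw [if_neg ha]; omega
    rw [hd]
    congr 1
    simp only [smul_eq_mul]
    ring

lemma eulerP_monomial {n : ℕ} (d : Fin n →₀ ℕ) (c : ℝ) :
    eulerP (monomial d c) = ((∑ i, d i : ℕ) : ℝ) • monomial d c := by
  rw [eulerP_apply]
  rw [Finset.sum_congr rfl fun i _ => X_mul_pderiv_monomial i d c]
  rw [← Finset.sum_smul]
  congr 1
  push_cast
  rfl

lemma coeff_eulerP {n : ℕ} (d : Fin n →₀ ℕ) (p : MvPolynomial (Fin n) ℝ) :
    coeff d (eulerP p) = ((∑ i, d i : ℕ) : ℝ) * coeff d p := by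
  induction p using MvPolynomial.induction_on' with
  | monomial e c =>
    rw [eulerP_monomial, coeff_smul, coeff_monomial]
    by_cases h : e = d
    · subst h; simp [smul_eq_mul]
    · simp [h]
  | add p q hp hq => rw [map_add, coeff_add, coeff_add, hp, hq]; ring

lemma eulerP_inj {n : ℕ} {c : ℝ} (hc : 0 < c) (p : MvPolynomial (Fin n) ℝ)
    (h : eulerP p + c • p = 0) : p = 0 := by
  apply MvPolynomial.ext
  intro d
  have hd := congrArg (coeff d) h
  rw [coeff_add, coeff_eulerP, coeff_smul, coeff_zero, smul_eq_mul] at hd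
  have h2 : (((∑ i, d i : ℕ) : ℝ) + c) * coeff d p = 0 := by rw [add_mul]; linarith
  have h3 : (((∑ i, d i : ℕ) : ℝ) + c) ≠ 0 := by positivity
  rw [coeff_zero]
  exact (mul_eq_zero.mp h2).resolve_left h3

lemma pderiv_eulerP {n : ℕ} (j : Fin n) (p : MvPolynomial (Fin n) ℝ) :
    pderiv j (eulerP p) = pderiv j p + eulerP (pderiv j p) := by
  rw [eulerP_apply, map_sum]
  have step : ∀ i : Fin n, pderiv j (X i * pderiv i p)
      = (if i = j then pderiv j p else 0) + X i * pderiv i (pderiv j p) := by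
    intro i
    rw [pderiv_mul]
    by_cases h : i = j
    · subst h
      rw [pderiv_X_self, if_pos rfl, one_mul]
    · rw [pderiv_X_of_ne h, if_neg h, zero_mul, zero_add, zero_add, pderiv_comm' i j]
  rw [Finset.sum_congr rfl fun i _ => step i, Finset.sum_add_distrib,
    Finset.sum_ite_eq' Finset.univ j fun _ => pderiv j p, if_pos (Finset.mem_univ j),
    eulerP_apply]

lemma pderiv_prod_X {n : ℕ} (τ : Finset (Fin n)) (j : Fin n) :
    pderiv j (∏ i ∈ τ, (X i : MvPolynomial (Fin n) ℝ))
      = if j ∈ τ then ∏ i ∈ τ.erase j, (X i : MvPolynomial (Fin n) ℝ) else 0 := by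
  induction τ using Finset.induction_on with
  | empty => simp
  | @insert a s ha ih =>
    rw [Finset.prod_insert ha, pderiv_mul, ih]
    by_cases h : j = a
    · subst h
      rw [pderiv_X_self, one_mul, if_pos (Finset.mem_insert_self j s),
        Finset.erase_insert ha]
      simp [ha]
    · rw [pderiv_X_of_ne (fun hc => h hc.symm), zero_mul, zero_add]
      by_cases hj : j ∈ s
      · rw [if_pos hj, if_pos (Finset.mem_insert_of_mem hj),
          Finset.erase_insert_of_ne (fun hc => h hc.symm),
          Finset.prod_insert (fun hc => ha (Finset.mem_of_mem_erase hc))]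
      · rw [if_neg hj, mul_zero, if_neg (by simp [h, hj])]

lemma eulerP_prod_X {n : ℕ} (τ : Finset (Fin n)) :
    eulerP (∏ i ∈ τ, (X i : MvPolynomial (Fin n) ℝ))
      = ((τ.card : ℝ)) • ∏ i ∈ τ, (X i : MvPolynomial (Fin n) ℝ) := by
  rw [eulerP_apply]
  rw [Finset.sum_congr rfl fun i _ => by rw [pderiv_prod_X τ i, mul_ite, mul_zero]]
  rw [Finset.sum_ite_mem, Finset.univ_inter]
  rw [Finset.sum_congr rfl fun i hi => Finset.mul_prod_erase τ _ hi]
  rw [Finset.sum_const, Nat.cast_smul_eq_nsmul]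

end AuxDev

section FormDev

open Finset MvPolynomial

/-! ### The Euler operator on forms -/

noncomputable def euler (n m : ℕ) : Form n m →ₗ[ℝ] Form n m where
  toFun ω := fun s => eulerP (ω s)
  map_add' ω η := by funext s; simp
  map_smul' c ω := by funext s; simp

lemma euler_apply {n m : ℕ} (ω : Form n m) (s : Idx n m) :
    euler n m ω s = eulerP (ω s) := rfl

/-! ### Normal forms for the operators -/

lemma codiff_def {n k : ℕ} (ω : Form n (k+1)) (s : Idx n k) :
    codiff n k ω s = -∑ i ∈ (s.1ᶜ).attach,
      sgn s.1 i.1 • pderiv i.1 (ω (insertIdx s (Finset.mem_compl.mp i.2))) := rfl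

lemma kappaDelta_def {n k : ℕ} (ω : Form n k) (s : Idx n (k+1)) :
    kappaDelta n k ω s = ∑ i ∈ s.1.attach,
      sgn s.1 i.1 • (X i.1 * ω (eraseIdx s i.2)) := rfl

lemma codiff_apply {n k : ℕ} (ω : Form n (k+1)) (s : Idx n k) :
    codiff n k ω s = -∑ j : Fin n, sgn s.1 j • pderiv j (exf ω (insert j s.1)) := by
  rw [codiff_def]
  have step1 : ∑ i ∈ (s.1ᶜ).attach,
        sgn s.1 i.1 • pderiv i.1 (ω (insertIdx s (Finset.mem_compl.mp i.2)))
      = ∑ j ∈ s.1ᶜ, sgn s.1 j • pderiv j (exf ω (insert j s.1)) := by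
    rw [← Finset.sum_attach (s.1ᶜ)
      (fun j => sgn s.1 j • pderiv j (exf ω (insert j s.1)))]
    refine Finset.sum_congr rfl fun i _ => ?_
    rw [exf_eq ω (show (insert i.1 s.1).card = k + 1 from
      (insertIdx s (Finset.mem_compl.mp i.2)).2)]
    rfl
  rw [step1]
  congr 1
  refine Finset.sum_subset (Finset.subset_univ _) fun j _ hj => ?_
  have hj' : j ∈ s.1 := by simpa using hj
  rw [exf_ne ω (by rw [Finset.insert_eq_self.mpr hj', s.2]; omega)]
  simp

lemma kappaDelta_apply {n k : ℕ} (ω : Form n k) (s : Idx n (k+1)) :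
    kappaDelta n k ω s = ∑ i : Fin n, sgn s.1 i • (X i * exf ω (s.1.erase i)) := by
  rw [kappaDelta_def]
  have step1 : ∑ i ∈ s.1.attach, sgn s.1 i.1 • (X i.1 * ω (eraseIdx s i.2))
      = ∑ i ∈ s.1, sgn s.1 i • (X i * exf ω (s.1.erase i)) := by
    rw [← Finset.sum_attach s.1 (fun i => sgn s.1 i • (X i * exf ω (s.1.erase i)))]
    refine Finset.sum_congr rfl fun i _ => ?_
    rw [exf_eq ω (show (s.1.erase i.1).card = k from (eraseIdx s i.2).2)]
    rfl
  rw [step1]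
  refine Finset.sum_subset (Finset.subset_univ _) fun i _ hi => ?_
  rw [exf_ne ω (by rw [Finset.erase_eq_of_notMem hi, s.2]; omega)]
  simp

lemma exf_codiff {n k : ℕ} (ω : Form n (k+1)) (u : Finset (Fin n)) :
    exf (codiff n k ω) u =
      if u.card = k then -∑ j : Fin n, sgn u j • pderiv j (exf ω (insert j u)) else 0 := by
  by_cases h : u.card = k
  · rw [if_pos h, exf_eq _ h, codiff_apply]
  · rw [if_neg h, exf_ne _ h]

lemma exf_kappaDelta {n k : ℕ} (ω : Form n k) (u : Finset (Fin n)) :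
    exf (kappaDelta n k ω) u =
      if u.card = k + 1 then ∑ i : Fin n, sgn u i • (X i * exf ω (u.erase i)) else 0 := by
  by_cases h : u.card = k + 1
  · rw [if_pos h, exf_eq _ h, kappaDelta_apply]
  · rw [if_neg h, exf_ne _ h]

lemma exf_euler {n m : ℕ} (ω : Form n m) (u : Finset (Fin n)) :
    exf (euler n m ω) u = eulerP (exf ω u) := by
  by_cases h : u.card = m
  · rw [exf_eq _ h, exf_eq _ h, euler_apply]
  · rw [exf_ne _ h, exf_ne _ h, map_zero]

lemma exf_monForm {n m : ℕ} (τ : Finset (Fin n)) (σ : Idx n m) (u : Finset (Fin n)) :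
    exf (monForm n m τ σ) u
      = if u = σ.1 then ∏ i ∈ τ, (X i : MvPolynomial (Fin n) ℝ) else 0 := by
  by_cases h : u.card = m
  · rw [exf_eq _ h]
    show (if (⟨u, h⟩ : Idx n m) = σ then _ else _) = _
    by_cases he : u = σ.1
    · rw [if_pos he, if_pos (Subtype.ext he)]
    · rw [if_neg he, if_neg (fun hc => he (congrArg Subtype.val hc))]
  · rw [exf_ne _ h, if_neg (fun he => h (by rw [he]; exact σ.2))]

lemma monForm_apply {n m : ℕ} (τ : Finset (Fin n)) (σ s : Idx n m) :
    monForm n m τ σ s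
      = if s.1 = σ.1 then ∏ i ∈ τ, (X i : MvPolynomial (Fin n) ℝ) else 0 := by
  have h := exf_monForm τ σ s.1
  rw [exf_eq _ s.2] at h
  exact h

end FormDev

section MainIdentities

open Finset MvPolynomial

/-! ### δδ = 0 -/

lemma codiff_codiff {n k : ℕ} (ω : Form n (k+2)) :
    codiff n k (codiff n (k+1) ω) = 0 := by
  funext s
  set t := s.1 with ht
  have hcard : t.card = k := s.2
  set F : Fin n → Fin n → MvPolynomial (Fin n) ℝ := fun j i =>
    if j ∈ t then 0 else
      (sgn t j * sgn (insert j t) i) •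
        pderiv j (pderiv i (exf ω (insert i (insert j t)))) with hF
  have h1 : codiff n k (codiff n (k+1) ω) s = ∑ j, ∑ i, F j i := by
    rw [codiff_apply, ← Finset.sum_neg_distrib]
    refine Finset.sum_congr rfl fun j _ => ?_
    rw [exf_codiff]
    by_cases hj : j ∈ t
    · rw [if_neg (by rw [Finset.insert_eq_self.mpr hj, hcard]; omega)]
      simp [hF, hj, -smul_eq_zero]
    · rw [if_pos (by rw [Finset.card_insert_of_notMem hj, hcard])]
      rw [map_neg, smul_neg, neg_neg, map_sum, Finset.smul_sum]
      refine Finset.sum_congr rfl fun i _ => ?_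
      simp only [hF, if_neg hj]
      rw [Derivation.map_smul, smul_smul]
  have hFij : ∀ j i : Fin n, F j i + F i j = 0 := by
    intro j i
    by_cases hij : i = j
    · subst hij
      by_cases hi : i ∈ t
      · simp [hF, hi, -smul_eq_zero]
      · have : exf ω (insert i t) = 0 := by
          apply exf_ne
          rw [Finset.card_insert_of_notMem hi, hcard]
          omega
        simp [hF, hi, this, -smul_eq_zero]
    · by_cases hj : j ∈ t <;> by_cases hi : i ∈ t
      · simp [hF, hj, hi, -smul_eq_zero]
      · have : exf ω (insert i t) = 0 := by
          apply exf_ne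
          rw [Finset.card_insert_of_notMem hi, hcard]
          omega
        simp [hF, hj, hi, this, -smul_eq_zero]
      · have : exf ω (insert j t) = 0 := by
          apply exf_ne
          rw [Finset.card_insert_of_notMem hj, hcard]
          omega
        simp [hF, hj, hi, this, -smul_eq_zero]
      · have hset : insert i (insert j t) = insert j (insert i t) := Finset.insert_comm i j t
        rw [hF]
        simp only [if_neg hj, if_neg hi]
        rw [hset, pderiv_comm' j i, ← add_smul, sgn_cross' hi hj hij, zero_smul]
  have hS : (∑ j, ∑ i, F j i) = (∑ j, ∑ i, F i j) :=
    Finset.sum_comm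
  have h2 : (∑ j, ∑ i, F j i) + (∑ j, ∑ i, F j i) = 0 := by
    nth_rewrite 2 [hS]
    rw [← Finset.sum_add_distrib]
    refine Finset.sum_eq_zero fun j _ => ?_
    rw [← Finset.sum_add_distrib]
    exact Finset.sum_eq_zero fun i _ => hFij j i
  have h3 : (∑ j, ∑ i, F j i) = 0 := by
    have h4 : (∑ j, ∑ i, F j i)
        = ((1:ℝ)/2) • ((∑ j, ∑ i, F j i) + (∑ j, ∑ i, F j i)) := by
      rw [smul_add, ← add_smul]
      norm_num
    rw [h4, h2, smul_zero]
  show codiff n k (codiff n (k+1) ω) s = 0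
  rw [h1, h3]

/-! ### The homotopy identity -/

lemma homotopy {n k : ℕ} (ω : Form n (k+1)) (s : Idx n (k+1)) :
    kappaDelta n k (codiff n k ω) s + codiff n (k+1) (kappaDelta n (k+1) ω) s
      = -((s.1ᶜ.card : ℝ)) • ω s - eulerP (ω s) := by
  set t := s.1 with ht
  have hcard : t.card = k + 1 := s.2
  have hωs : exf ω t = ω s := by
    have h := exf_eq ω hcard; exact h
  set A : Fin n → Fin n → MvPolynomial (Fin n) ℝ := fun i j =>
    if i ∈ t then
      -((sgn t i * sgn (t.erase i) j) • (X i * pderiv j (exf ω (insert j (t.erase i)))))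
    else 0 with hA
  set B : Fin n → Fin n → MvPolynomial (Fin n) ℝ := fun i j =>
    if j ∈ t then 0 else
      -((sgn t j * sgn (insert j t) i) • pderiv j (X i * exf ω ((insert j t).erase i)))
    with hB
  have h1 : kappaDelta n k (codiff n k ω) s = ∑ i, ∑ j, A i j := by
    rw [kappaDelta_apply]
    refine Finset.sum_congr rfl fun i _ => ?_
    rw [exf_codiff]
    by_cases hi : i ∈ t
    · rw [if_pos (by rw [Finset.card_erase_of_mem hi, hcard]; omega)]
      simp only [hA, if_pos hi]
      rw [mul_neg, smul_neg, Finset.mul_sum, Finset.smul_sum, ← Finset.sum_neg_distrib]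
      exact Finset.sum_congr rfl fun j _ => by rw [mul_smul_comm, smul_smul]
    · rw [if_neg (by rw [Finset.erase_eq_of_notMem hi, hcard]; omega)]
      simp [hA, hi, -smul_eq_zero]
  have h2 : codiff n (k+1) (kappaDelta n (k+1) ω) s = ∑ i, ∑ j, B i j := by
    rw [codiff_apply, ← Finset.sum_neg_distrib, Finset.sum_comm (f := fun i j => B i j)]
    refine Finset.sum_congr rfl fun j _ => ?_
    rw [exf_kappaDelta]
    by_cases hj : j ∈ t
    · rw [if_neg (by rw [Finset.insert_eq_self.mpr hj, hcard]; omega)]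
      simp [hB, hj, -smul_eq_zero]
    · rw [if_pos (by rw [Finset.card_insert_of_notMem hj, hcard])]
      rw [map_sum, Finset.smul_sum, ← Finset.sum_neg_distrib]
      refine Finset.sum_congr rfl fun i _ => ?_
      simp only [hB, if_neg hj]
      rw [Derivation.map_smul, smul_smul]
  have hdiag : ∀ i : Fin n, (∑ j, A i j) + (∑ j, B i j)
      = -(X i * pderiv i (ω s)) - (if i ∈ t then 0 else ω s) := by
    intro i
    rw [← Finset.sum_add_distrib, Finset.sum_eq_single i ?_ (fun h => absurd (Finset.mem_univ i) h)]
    · -- the diagonal term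
      by_cases hi : i ∈ t
      · simp only [hA, hB, if_pos hi]
        rw [Finset.insert_erase hi, sgn_erase_self hi, sgn_mul_self, hωs, one_smul,
          add_zero, sub_zero]
      · simp only [hA, hB, if_neg hi]
        rw [Finset.erase_insert hi, sgn_insert_self hi, sgn_mul_self, hωs, one_smul,
          zero_add, pderiv_mul, pderiv_X_self, one_mul]
        ring
    · -- off-diagonal terms vanish
      intro j _ hji
      have hij : i ≠ j := fun h => hji h.symm
      by_cases hi : i ∈ t <;> by_cases hj : j ∈ t
      · -- i ∈ t, j ∈ t : A inner set too small, B guard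
        have hj' : j ∈ t.erase i := Finset.mem_erase.mpr ⟨hji, hj⟩
        have : exf ω (insert j (t.erase i)) = 0 := by
          apply exf_ne
          rw [Finset.insert_eq_self.mpr hj', Finset.card_erase_of_mem hi, hcard]
          omega
        simp [hA, hB, hi, hj, this, -smul_eq_zero]
      · -- i ∈ t, j ∉ t : cross terms cancel
        have hset : (insert j t).erase i = insert j (t.erase i) :=
          Finset.erase_insert_of_ne (show j ≠ i from hij.symm)
        simp only [hA, hB, if_pos hi, if_neg hj]
        rw [hset, pderiv_mul, pderiv_X_of_ne hij, zero_mul, zero_add,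
          ← neg_add, ← add_smul, sgn_cross hi hj hij, zero_smul, neg_zero]
      · -- i ∉ t, j ∈ t
        simp [hA, hB, hi, hj, -smul_eq_zero]
      · -- i ∉ t, j ∉ t
        have : exf ω ((insert j t).erase i) = 0 := by
          apply exf_ne
          rw [Finset.erase_eq_of_notMem (by simp [hi, hij]),
            Finset.card_insert_of_notMem hj, hcard]
          omega
        simp [hA, hB, hi, hj, this, -smul_eq_zero]
  rw [h1, h2, ← Finset.sum_add_distrib, Finset.sum_congr rfl fun i _ => hdiag i,
    Finset.sum_sub_distrib]
  have hleft : ∑ i : Fin n, -(X i * pderiv i (ω s)) = -eulerP (ω s) := by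
    rw [Finset.sum_neg_distrib, eulerP_apply]
  have hright : ∑ i : Fin n, (if i ∈ t then 0 else ω s) = ((tᶜ.card : ℝ)) • ω s := by
    rw [Finset.sum_congr rfl (fun i _ => by
      rw [show (if i ∈ t then (0 : MvPolynomial (Fin n) ℝ) else ω s)
          = (if i ∈ tᶜ then ω s else 0) by
        by_cases hi : i ∈ t <;> simp [hi]])]
    rw [Finset.sum_ite_mem, Finset.univ_inter, Finset.sum_const, Nat.cast_smul_eq_nsmul]
  rw [hleft, hright, neg_smul, sub_eq_add_neg, sub_eq_add_neg, add_comm]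

end MainIdentities

section FinalDev

open Finset MvPolynomial

/-! ### Commutation of codifferential and Euler operator -/

lemma codiff_euler {n k : ℕ} (ω : Form n (k+1)) :
    codiff n k (euler n (k+1) ω) = euler n k (codiff n k ω) + codiff n k ω := by
  funext s
  show codiff n k (euler n (k+1) ω) s = eulerP (codiff n k ω s) + codiff n k ω s
  rw [codiff_apply (ω := euler n (k+1) ω), codiff_apply (ω := ω)]
  rw [Finset.sum_congr rfl fun j (_ : j ∈ Finset.univ) => by
    rw [exf_euler, pderiv_eulerP, smul_add]]
  rw [Finset.sum_add_distrib, neg_add, map_neg, map_sum]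
  rw [Finset.sum_congr rfl fun j (_ : j ∈ Finset.univ) =>
    (_root_.map_smul eulerP (sgn s.1 j) (pderiv j (exf ω (insert j s.1)))).symm]
  rw [add_comm]

/-! ### Action on the monomial forms -/

lemma codiff_monForm {n k : ℕ} (τ : Finset (Fin n)) (σ : Idx n (k+1)) (hτ : τ ⊆ σ.1) :
    codiff n k (monForm n (k+1) τ σ)
      = ∑ i ∈ τ.attach,
          (-(sgn σ.1 i.1)) • monForm n k (τ.erase i.1) (eraseIdx σ (hτ i.2)) := by
  funext s
  have hR : (∑ i ∈ τ.attach,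
        (-(sgn σ.1 i.1)) • monForm n k (τ.erase i.1) (eraseIdx σ (hτ i.2))) s
      = ∑ i ∈ τ, (-(sgn σ.1 i)) •
          (if s.1 = σ.1.erase i then ∏ x ∈ τ.erase i, (X x : MvPolynomial (Fin n) ℝ) else 0) := by
    rw [Finset.sum_apply]
    rw [← Finset.sum_attach τ (fun i => (-(sgn σ.1 i)) •
      (if s.1 = σ.1.erase i then ∏ x ∈ τ.erase i, (X x : MvPolynomial (Fin n) ℝ) else 0))]
    refine Finset.sum_congr rfl fun i _ => ?_
    rw [Pi.smul_apply, monForm_apply]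
    rfl
  rw [hR, codiff_apply]
  by_cases hc : ∃ i, i ∈ τ ∧ s.1 = σ.1.erase i
  · obtain ⟨i0, hi0τ, hi0s⟩ := hc
    have hi0σ : i0 ∈ σ.1 := hτ hi0τ
    have hins : insert i0 s.1 = σ.1 := by rw [hi0s, Finset.insert_erase hi0σ]
    have hi0ns : i0 ∉ s.1 := by rw [hi0s]; exact Finset.notMem_erase i0 σ.1
    rw [Finset.sum_eq_single i0 ?_ (fun h => absurd (Finset.mem_univ i0) h)]
    · rw [Finset.sum_eq_single i0 ?_ (fun h => absurd hi0τ h)]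
      · rw [if_pos hi0s, exf_monForm, if_pos hins, pderiv_prod_X, if_pos hi0τ]
        rw [hi0s, sgn_erase_self hi0σ, neg_smul]
      · intro i hiτ hii0
        rw [if_neg, smul_zero]
        intro hcon
        have h1 : i0 ∈ σ.1.erase i :=
          Finset.mem_erase.mpr ⟨fun h => hii0 h.symm, hi0σ⟩
        rw [← hcon, hi0s] at h1
        exact Finset.notMem_erase i0 σ.1 h1
    · intro j _ hji0
      rw [exf_monForm]
      by_cases hj : insert j s.1 = σ.1
      · exfalso
        have hjns : j ∉ s.1 := by
          intro hjs
          rw [Finset.insert_eq_self.mpr hjs] at hj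
          have := s.2
          rw [hj, σ.2] at this
          omega
        have : i0 ∈ insert j s.1 := hj.symm ▸ hi0σ
        rcases Finset.mem_insert.mp this with h | h
        · exact hji0 h.symm
        · exact hi0ns h
      · rw [if_neg hj, map_zero, smul_zero]
  · push_neg at hc
    have hR0 : ∑ i ∈ τ, (-(sgn σ.1 i)) •
        (if s.1 = σ.1.erase i then ∏ x ∈ τ.erase i, (X x : MvPolynomial (Fin n) ℝ) else 0)
        = 0 := by
      refine Finset.sum_eq_zero fun i hi => ?_
      rw [if_neg (hc i hi), smul_zero]
    rw [hR0, neg_eq_zero]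
    refine Finset.sum_eq_zero fun j _ => ?_
    rw [exf_monForm]
    by_cases hj : insert j s.1 = σ.1
    · have hjns : j ∉ s.1 := by
        intro hjs
        rw [Finset.insert_eq_self.mpr hjs] at hj
        have := s.2
        rw [hj, σ.2] at this
        omega
      rw [if_pos hj, pderiv_prod_X, if_neg, smul_zero]
      intro hjτ
      exact hc j hjτ (by rw [← hj, Finset.erase_insert hjns])
    · rw [if_neg hj, map_zero, smul_zero]

lemma kappaDelta_monForm {n k : ℕ} (τ : Finset (Fin n)) (σ : Idx n (k+1)) (hτ : τ ⊆ σ.1) :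
    kappaDelta n (k+1) (monForm n (k+1) τ σ)
      = ∑ i ∈ (σ.1ᶜ).attach,
          sgn σ.1 i.1 • monForm n (k+2) (insert i.1 τ) (insertIdx σ (Finset.mem_compl.mp i.2)) := by
  funext s
  have hR : (∑ i ∈ (σ.1ᶜ).attach,
        sgn σ.1 i.1 • monForm n (k+2) (insert i.1 τ) (insertIdx σ (Finset.mem_compl.mp i.2))) s
      = ∑ i ∈ σ.1ᶜ, sgn σ.1 i •
          (if s.1 = insert i σ.1 then ∏ x ∈ insert i τ, (X x : MvPolynomial (Fin n) ℝ) else 0) := by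
    rw [Finset.sum_apply]
    rw [← Finset.sum_attach (σ.1ᶜ) (fun i => sgn σ.1 i •
      (if s.1 = insert i σ.1 then ∏ x ∈ insert i τ, (X x : MvPolynomial (Fin n) ℝ) else 0))]
    refine Finset.sum_congr rfl fun i _ => ?_
    rw [Pi.smul_apply, monForm_apply]
    rfl
  rw [hR, kappaDelta_apply]
  by_cases hc : ∃ i, i ∉ σ.1 ∧ s.1 = insert i σ.1
  · obtain ⟨i0, hi0σ, hi0s⟩ := hc
    have hi0s' : i0 ∈ s.1 := hi0s ▸ Finset.mem_insert_self i0 σ.1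
    have hers : s.1.erase i0 = σ.1 := by rw [hi0s, Finset.erase_insert hi0σ]
    rw [Finset.sum_eq_single i0 ?_ (fun h => absurd (Finset.mem_univ i0) h)]
    · rw [Finset.sum_eq_single i0 ?_ (fun h => absurd (Finset.mem_compl.mpr hi0σ) h)]
      · rw [exf_monForm, if_pos hers, if_pos hi0s]
        have hi0τ : i0 ∉ τ := fun h => hi0σ (hτ h)
        rw [Finset.prod_insert hi0τ, hi0s, sgn_insert_self hi0σ]
      · intro i hic hii0
        rw [if_neg, smul_zero]
        intro hcon
        apply hii0
        have hi : i ∈ s.1 := hcon ▸ Finset.mem_insert_self i σ.1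
        rw [hi0s] at hi
        rcases Finset.mem_insert.mp hi with h | h
        · exact h
        · exact absurd h (Finset.mem_compl.mp hic)
    · intro j _ hji0
      rw [exf_monForm]
      by_cases hj : s.1.erase j = σ.1
      · exfalso
        have hjs : j ∈ s.1 := by
          by_contra hjs
          rw [Finset.erase_eq_of_notMem hjs] at hj
          have := s.2
          rw [hj, σ.2] at this
          omega
        apply hi0σ
        rw [← hj]
        exact Finset.mem_erase.mpr ⟨fun h => hji0 h.symm, hi0s'⟩
      · rw [if_neg hj, mul_zero, smul_zero]
  · push_neg at hc
    have hR0 : ∑ i ∈ σ.1ᶜ, sgn σ.1 i •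
        (if s.1 = insert i σ.1 then ∏ x ∈ insert i τ, (X x : MvPolynomial (Fin n) ℝ) else 0)
        = 0 := by
      refine Finset.sum_eq_zero fun i hi => ?_
      rw [if_neg (hc i (Finset.mem_compl.mp hi)), smul_zero]
    rw [hR0]
    refine Finset.sum_eq_zero fun i _ => ?_
    rw [exf_monForm]
    by_cases hi : s.1.erase i = σ.1
    · have his : i ∈ s.1 := by
        by_contra his
        rw [Finset.erase_eq_of_notMem his] at hi
        have := s.2
        rw [hi, σ.2] at this
        omega
      exfalso
      have hiσ : i ∉ σ.1 := hi ▸ Finset.notMem_erase i s.1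
      exact hc i hiσ (by rw [← hi, Finset.insert_erase his])
    · rw [if_neg hi, mul_zero, smul_zero]

lemma euler_monForm {n m : ℕ} (τ : Finset (Fin n)) (σ : Idx n m) :
    euler n m (monForm n m τ σ) = ((τ.card : ℝ)) • monForm n m τ σ := by
  funext s
  show eulerP (monForm n m τ σ s) = ((τ.card : ℝ)) • monForm n m τ σ s
  rw [monForm_apply]
  by_cases h : s.1 = σ.1
  · rw [if_pos h, eulerP_prod_X]
  · rw [if_neg h, map_zero, smul_zero]

end FinalDev

section QsDev

open Finset MvPolynomial

lemma codiff_mem_Qs {n k : ℕ} {ω : Form n (k+2)} (h : ω ∈ Qs n (k+2)) :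
    codiff n (k+1) ω ∈ Qs n (k+1) := by
  refine Submodule.span_induction
    (p := fun x _ => codiff n (k+1) x ∈ Qs n (k+1)) ?_ ?_ ?_ ?_ h
  · rintro x ⟨τ, σ, hcd, hsub, rfl⟩
    rw [codiff_monForm τ σ hsub]
    refine Submodule.sum_mem _ fun i _ => Submodule.smul_mem _ _ ?_
    refine Submodule.subset_span ⟨τ.erase i.1, eraseIdx σ (hsub i.2), ?_, ?_, rfl⟩
    · rw [Finset.card_erase_of_mem i.2]; omega
    · exact Finset.erase_subset_erase _ hsub
  · show codiff n (k+1) (0 : Form n (k+2)) ∈ Qs n (k+1)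
    rw [map_zero]; exact Submodule.zero_mem _
  · intro x y _ _ hx hy
    show codiff n (k+1) (x + y) ∈ Qs n (k+1)
    rw [map_add]; exact Submodule.add_mem _ hx hy
  · intro a x _ hx
    show codiff n (k+1) (a • x) ∈ Qs n (k+1)
    rw [_root_.map_smul]; exact Submodule.smul_mem _ _ hx

lemma kappaDelta_mem_Qs {n k : ℕ} {ω : Form n (k+1)} (h : ω ∈ Qs n (k+1)) :
    kappaDelta n (k+1) ω ∈ Qs n (k+2) := by
  refine Submodule.span_induction
    (p := fun x _ => kappaDelta n (k+1) x ∈ Qs n (k+2)) ?_ ?_ ?_ ?_ h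
  · rintro x ⟨τ, σ, hcd, hsub, rfl⟩
    rw [kappaDelta_monForm τ σ hsub]
    refine Submodule.sum_mem _ fun i _ => Submodule.smul_mem _ _ ?_
    refine Submodule.subset_span
      ⟨insert i.1 τ, insertIdx σ (Finset.mem_compl.mp i.2), ?_, ?_, rfl⟩
    · rw [Finset.card_insert_of_notMem (fun hc => (Finset.mem_compl.mp i.2) (hsub hc))]
      omega
    · exact Finset.insert_subset_insert _ hsub
  · show kappaDelta n (k+1) (0 : Form n (k+1)) ∈ Qs n (k+2)
    rw [map_zero]; exact Submodule.zero_mem _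
  · intro x y _ _ hx hy
    show kappaDelta n (k+1) (x + y) ∈ Qs n (k+2)
    rw [map_add]; exact Submodule.add_mem _ hx hy
  · intro a x _ hx
    show kappaDelta n (k+1) (a • x) ∈ Qs n (k+2)
    rw [_root_.map_smul]; exact Submodule.smul_mem _ _ hx

lemma euler_mem_Qs {n m : ℕ} {ω : Form n m} (h : ω ∈ Qs n m) : euler n m ω ∈ Qs n m := by
  refine Submodule.span_induction (p := fun x _ => euler n m x ∈ Qs n m) ?_ ?_ ?_ ?_ h
  · rintro x ⟨τ, σ, hcd, hsub, rfl⟩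
    rw [euler_monForm]
    exact Submodule.smul_mem _ _ (Submodule.subset_span ⟨τ, σ, hcd, hsub, rfl⟩)
  · show euler n m (0 : Form n m) ∈ Qs n m
    rw [map_zero]; exact Submodule.zero_mem _
  · intro x y _ _ hx hy
    show euler n m (x + y) ∈ Qs n m
    rw [map_add]; exact Submodule.add_mem _ hx hy
  · intro a x _ hx
    show euler n m (a • x) ∈ Qs n m
    rw [_root_.map_smul]; exact Submodule.smul_mem _ _ hx

lemma Qs_fd (n m : ℕ) : FiniteDimensional ℝ (Qs n m) := by
  apply FiniteDimensional.span_of_finite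
  apply Set.Finite.subset (Set.finite_range
    (fun p : Finset (Fin n) × Idx n m => monForm n m p.1 p.2))
  rintro ω ⟨τ, σ, -, -, rfl⟩
  exact ⟨(τ, σ), rfl⟩

end QsDev

/-- For `1 ≤ k+1 ≤ n-1`:
`N(δ_{k+1}, Q_1^{*,-}Λ^{k+1}) = R(δ_{k+2}, Q_1^{*,-}Λ^{k+2})`. -/
theorem stmt6 (n k : ℕ) (hk : k + 1 ≤ n - 1) :
    LinearMap.ker (codiff n k) ⊓ Qs n (k+1) = Submodule.map (codiff n (k+1)) (Qs n (k+2)) := by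
  have hn : k + 2 ≤ n := by omega
  set c : ℕ := n - (k+1) with hc
  have hcpos : 0 < c := by omega
  set Bm : Form n (k+1) →ₗ[ℝ] Form n (k+1) :=
    euler n (k+1) + (c : ℝ) • LinearMap.id with hBm
  have hBapp : ∀ (x : Form n (k+1)),
      Bm x = euler n (k+1) x + (c : ℝ) • x := by
    intro x
    simp [hBm]
  have hBapp' : ∀ (x : Form n (k+1)) (s : Idx n (k+1)),
      Bm x s = eulerP (x s) + (c : ℝ) • x s := by
    intro x s
    rw [hBapp]
    rfl
  have hBinj : ∀ x : Form n (k+1), Bm x = 0 → x = 0 := by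
    intro x hx
    funext s
    have hs := congrFun hx s
    rw [hBapp' x s] at hs
    have hcr : (0 : ℝ) < (c : ℝ) := by exact_mod_cast hcpos
    show x s = 0
    exact eulerP_inj hcr (x s) hs
  have hhom : ∀ x : Form n (k+1), codiff n k x = 0 →
      codiff n (k+1) (kappaDelta n (k+1) x) = -(Bm x) := by
    intro x hx
    funext s
    have h := homotopy x s
    rw [hx, map_zero] at h
    have hcc : ((s.1ᶜ.card : ℕ) : ℝ) = (c : ℝ) := by
      rw [Finset.card_compl, s.2, Fintype.card_fin, hc]
    rw [Pi.zero_apply, zero_add] at h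
    show codiff n (k+1) (kappaDelta n (k+1) x) s = -(Bm x s)
    rw [h, hcc, hBapp' x s, neg_smul, neg_add_rev, sub_eq_add_neg]
  set V := LinearMap.ker (codiff n k) ⊓ Qs n (k+1) with hV
  have hBV : ∀ x ∈ V, Bm x ∈ V := by
    intro x hx
    obtain ⟨h1, h2⟩ := Submodule.mem_inf.mp hx
    refine Submodule.mem_inf.mpr ⟨?_, ?_⟩
    · rw [LinearMap.mem_ker] at h1 ⊢
      rw [hBapp, map_add, _root_.map_smul, codiff_euler, h1, map_zero]
      simp
    · rw [hBapp]
      exact Submodule.add_mem _ (euler_mem_Qs h2) (Submodule.smul_mem _ _ h2)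
  haveI : FiniteDimensional ℝ (Qs n (k+1)) := Qs_fd n (k+1)
  haveI : FiniteDimensional ℝ V := Submodule.finiteDimensional_of_le inf_le_right
  have hinj : Function.Injective (Bm.restrict hBV) := by
    intro a b hab
    have hval : Bm a.1 = Bm b.1 := by
      have h1 := congrArg Subtype.val hab
      simpa [LinearMap.restrict_apply] using h1
    have h0 : Bm (a.1 - b.1) = 0 := by rw [map_sub, hval, sub_self]
    exact Subtype.ext (sub_eq_zero.mp (hBinj _ h0))
  have hsurj := (LinearMap.injective_iff_surjective).mp hinj
  apply le_antisymm
  · intro x hx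
    obtain ⟨ξ, hξ⟩ := hsurj ⟨-x, Submodule.neg_mem _ hx⟩
    have hξv : Bm ξ.1 = -x := by
      have h1 := congrArg Subtype.val hξ
      simpa [LinearMap.restrict_apply] using h1
    obtain ⟨hξker, hξQs⟩ := Submodule.mem_inf.mp ξ.2
    refine Submodule.mem_map.mpr ⟨kappaDelta n (k+1) ξ.1, kappaDelta_mem_Qs hξQs, ?_⟩
    rw [hhom ξ.1 (LinearMap.mem_ker.mp hξker), hξv, neg_neg]
  · rintro x ⟨y, hy, rfl⟩
    exact Submodule.mem_inf.mpr
      ⟨LinearMap.mem_ker.mpr (codiff_codiff y), codiff_mem_Qs hy⟩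
end

section
/- For the lowest-degree trimmed polynomial spaces on R^n: the range of d^k on P_1^-Λ^k equals P_0Λ^{k+1}, which equals the null space of δ_{k+1} on P_1^{*,-}Λ^{k+1}; and the null space of d^k on P_1^-Λ^k equals P_0Λ^k, which equals the range of δ_{k+1} on P_1^{*,-}Λ^{k+1}. -/
open MvPolynomial Finset MeasureTheory

/-! ### Auxiliary lemmas -/

lemma sgn_sq {n : ℕ} (s : Finset (Fin n)) (i : Fin n) : sgn s i * sgn s i = 1 := by
  unfold sgn; rw [← pow_add]; exact Even.neg_one_pow ⟨_, rfl⟩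

lemma sgn_erase_s9 {n : ℕ} (s : Finset (Fin n)) (i : Fin n) : sgn (s.erase i) i = sgn s i := by
  unfold sgn
  rw [Finset.filter_erase, Finset.erase_eq_of_notMem]
  simp

lemma sgn_insert_s9 {n : ℕ} (s : Finset (Fin n)) (i : Fin n) : sgn (insert i s) i = sgn s i := by
  unfold sgn
  rw [Finset.filter_insert]
  simp

lemma monForm_empty_apply (n k : ℕ) (σ s : Idx n k) :
    monForm n k ∅ σ s = if s = σ then 1 else 0 := by
  simp [monForm]

lemma pderiv_monForm (n k : ℕ) (σ s : Idx n k) (i : Fin n) :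
    pderiv i (monForm n k ∅ σ s) = 0 := by
  rw [monForm_empty_apply]
  split <;> simp [pderiv_one]

/-- `d` kills constant forms. -/
lemma extd_mon (n k : ℕ) (σ : Idx n k) : extd n k (monForm n k ∅ σ) = 0 := by
  funext t
  simp [extd, pderiv_monForm]

/-- `δ` kills constant forms. -/
lemma codiff_mon (n k : ℕ) (σ : Idx n (k+1)) : codiff n k (monForm n (k+1) ∅ σ) = 0 := by
  funext t
  simp [codiff, pderiv_monForm]

lemma koszul_mon_pd (n k : ℕ) (σ t : Idx n (k+1)) (i : Fin n) (hi : i ∈ t.1) :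
    pderiv i ((koszul n k (monForm n (k+1) ∅ σ)) (eraseIdx t hi)) =
      sgn t.1 i • (if t = σ then (1 : MvPolynomial (Fin n) ℝ) else 0) := by
  have hii : i ∈ ((t.1.erase i)ᶜ) := by simp
  simp only [koszul, LinearMap.coe_mk, AddHom.coe_mk, eraseIdx, map_sum]
  rw [Finset.sum_eq_single_of_mem ⟨i, hii⟩ (Finset.mem_attach _ _)]
  · have hins : insertIdx (eraseIdx t hi) (Finset.mem_compl.mp hii) = t := by
      apply Subtype.ext
      simp [insertIdx, eraseIdx, Finset.insert_erase hi]
    simp only [eraseIdx] at hins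
    rw [hins]
    rw [monForm_empty_apply]
    split
    · simp [sgn_erase_s9]
    · simp
  · intro j _ hj
    have hji : j.1 ≠ i := fun h => hj (Subtype.ext h)
    rw [monForm_empty_apply]
    split
    · simp [Derivation.leibniz, pderiv_X_of_ne hji]
    · simp

/-- `d ∘ κ = (k+1) • id` on constant `(k+1)`-forms. -/
lemma extd_koszul_mon (n k : ℕ) (σ : Idx n (k+1)) :
    extd n k (koszul n k (monForm n (k+1) ∅ σ)) = ((k+1 : ℕ) : ℝ) • monForm n (k+1) ∅ σ := by
  funext t
  simp only [extd, LinearMap.coe_mk, AddHom.coe_mk, Pi.smul_apply]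
  have : ∀ i ∈ t.1.attach,
      sgn t.1 i.1 • pderiv i.1 ((koszul n k (monForm n (k+1) ∅ σ)) (eraseIdx t i.2)) =
        (if t = σ then (1 : MvPolynomial (Fin n) ℝ) else 0) := by
    intro i _
    rw [koszul_mon_pd n k σ t i.1 i.2, smul_smul, sgn_sq, one_smul]
  rw [Finset.sum_congr rfl this, Finset.sum_const, Finset.card_attach, t.2,
    monForm_empty_apply, ← Nat.cast_smul_eq_nsmul ℝ]

lemma kd_mon_pd (n k : ℕ) (σ t : Idx n k) (i : Fin n) (hi : i ∈ (t.1)ᶜ) :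
    pderiv i ((kappaDelta n k (monForm n k ∅ σ)) (insertIdx t (Finset.mem_compl.mp hi))) =
      sgn t.1 i • (if t = σ then (1 : MvPolynomial (Fin n) ℝ) else 0) := by
  have hit : i ∉ t.1 := Finset.mem_compl.mp hi
  have hii : i ∈ (insert i t.1) := Finset.mem_insert_self i t.1
  simp only [kappaDelta, LinearMap.coe_mk, AddHom.coe_mk, insertIdx, map_sum]
  rw [Finset.sum_eq_single_of_mem ⟨i, hii⟩ (Finset.mem_attach _ _)]
  · have hers : eraseIdx (insertIdx t hit) hii = t := by
      apply Subtype.ext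
      simp [insertIdx, eraseIdx, Finset.erase_insert hit]
    simp only [insertIdx] at hers
    rw [hers, monForm_empty_apply]
    split
    · simp [sgn_insert_s9]
    · simp
  · intro j _ hj
    have hji : j.1 ≠ i := fun h => hj (Subtype.ext h)
    rw [monForm_empty_apply]
    split
    · simp [Derivation.leibniz, pderiv_X_of_ne hji]
    · simp

/-- `δ ∘ κᵟ = -(n-k) • id` on constant `k`-forms. -/
lemma codiff_kd_mon (n k : ℕ) (σ : Idx n k) :
    codiff n k (kappaDelta n k (monForm n k ∅ σ)) = (-((n-k : ℕ) : ℝ)) • monForm n k ∅ σ := by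
  funext t
  simp only [codiff, LinearMap.coe_mk, AddHom.coe_mk, Pi.smul_apply]
  have : ∀ i ∈ (t.1ᶜ).attach,
      sgn t.1 i.1 • pderiv i.1
          ((kappaDelta n k (monForm n k ∅ σ)) (insertIdx t (Finset.mem_compl.mp i.2))) =
        (if t = σ then (1 : MvPolynomial (Fin n) ℝ) else 0) := by
    intro i _
    rw [kd_mon_pd n k σ t i.1 i.2, smul_smul, sgn_sq, one_smul]
  rw [Finset.sum_congr rfl this, Finset.sum_const, Finset.card_attach,
    Finset.card_compl, Fintype.card_fin, t.2, monForm_empty_apply, ← Nat.cast_smul_eq_nsmul ℝ, neg_smul]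

lemma extd_P0 (n k : ℕ) {ω : Form n k} (hω : ω ∈ P0 n k) : extd n k ω = 0 := by
  induction hω using Submodule.span_induction with
  | mem x hx => obtain ⟨σ, rfl⟩ := hx; exact extd_mon n k σ
  | zero => simp
  | add x y _ _ hx hy => rw [map_add, hx, hy, add_zero]
  | smul c x _ hx => rw [_root_.map_smul, hx, smul_zero]

lemma codiff_P0 (n k : ℕ) {ω : Form n (k+1)} (hω : ω ∈ P0 n (k+1)) : codiff n k ω = 0 := by
  induction hω using Submodule.span_induction with
  | mem x hx => obtain ⟨σ, rfl⟩ := hx; exact codiff_mon n k σ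
  | zero => simp
  | add x y _ _ hx hy => rw [map_add, hx, hy, add_zero]
  | smul c x _ hx => rw [_root_.map_smul, hx, smul_zero]

lemma extd_koszul_P0 (n k : ℕ) {ω : Form n (k+1)} (hω : ω ∈ P0 n (k+1)) :
    extd n k (koszul n k ω) = ((k+1 : ℕ) : ℝ) • ω := by
  induction hω using Submodule.span_induction with
  | mem x hx => obtain ⟨σ, rfl⟩ := hx; exact extd_koszul_mon n k σ
  | zero => simp
  | add x y _ _ hx hy => rw [map_add, map_add, hx, hy, smul_add]
  | smul c x _ hx => rw [_root_.map_smul, _root_.map_smul, hx, smul_comm]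

lemma codiff_kd_P0 (n k : ℕ) {ω : Form n k} (hω : ω ∈ P0 n k) :
    codiff n k (kappaDelta n k ω) = (-((n-k : ℕ) : ℝ)) • ω := by
  induction hω using Submodule.span_induction with
  | mem x hx => obtain ⟨σ, rfl⟩ := hx; exact codiff_kd_mon n k σ
  | zero => simp
  | add x y _ _ hx hy => rw [map_add, map_add, hx, hy, smul_add]
  | smul c x _ hx => rw [_root_.map_smul, _root_.map_smul, hx, smul_comm]


theorem stmt9' (n k : ℕ) (hk : k + 1 ≤ n) :
    Submodule.map (extd n k) (Pm n k) = P0 n (k+1) ∧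
      P0 n (k+1) = LinearMap.ker (codiff n k) ⊓ PsS n k ∧
      LinearMap.ker (extd n k) ⊓ Pm n k = P0 n k ∧
      P0 n k = Submodule.map (codiff n k) (PsS n k) := by
  have hc1 : ((k+1 : ℕ) : ℝ) ≠ 0 := Nat.cast_ne_zero.mpr (Nat.succ_ne_zero k)
  have hc2 : (-((n-k : ℕ) : ℝ)) ≠ 0 := by
    simp only [ne_eq, neg_eq_zero, Nat.cast_eq_zero]
    omega
  refine ⟨?_, ?_, ?_, ?_⟩
  · -- R(d) = P0^{k+1}
    apply le_antisymm
    · rw [Pm, Submodule.map_sup, sup_le_iff]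
      constructor
      · intro x hx
        obtain ⟨a, ha, rfl⟩ := hx
        rw [extd_P0 n k ha]
        exact Submodule.zero_mem _
      · intro x hx
        obtain ⟨b, hb, rfl⟩ := hx
        obtain ⟨c, hc, rfl⟩ := hb
        rw [extd_koszul_P0 n k hc]
        exact Submodule.smul_mem _ _ hc
    · intro x hx
      refine ⟨koszul n k (((k+1 : ℕ) : ℝ)⁻¹ • x), ?_, ?_⟩
      · exact le_sup_right (α := Submodule ℝ (Form n k))
          ⟨((k+1 : ℕ) : ℝ)⁻¹ • x, Submodule.smul_mem _ _ hx, rfl⟩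
      · rw [_root_.map_smul, ← _root_.map_smul (koszul n k), extd_koszul_P0 n k (Submodule.smul_mem _ _ hx),
          smul_smul, mul_inv_cancel₀ hc1, one_smul]
  · -- P0^{k+1} = N(δ) ⊓ PsS
    apply le_antisymm
    · intro x hx
      exact ⟨LinearMap.mem_ker.mpr (codiff_P0 n k hx), le_sup_left (α := Submodule ℝ (Form n (k+1))) hx⟩
    · rintro x ⟨hker, hx⟩
      rw [PsS] at hx
      obtain ⟨a, ha, b, hb, rfl⟩ := Submodule.mem_sup.mp hx
      obtain ⟨c, hc, rfl⟩ := hb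
      have h0 : codiff n k (a + kappaDelta n k c) = (-((n-k : ℕ) : ℝ)) • c := by
        rw [map_add, codiff_P0 n k ha, codiff_kd_P0 n k hc, zero_add]
      rw [LinearMap.mem_ker.mp hker] at h0
      have hc0 : c = 0 := by
        calc c = (-((n-k : ℕ) : ℝ))⁻¹ • ((-((n-k : ℕ) : ℝ)) • c) := by
                rw [smul_smul, inv_mul_cancel₀ hc2, one_smul]
          _ = 0 := by rw [← h0, smul_zero]
      rw [hc0, map_zero, add_zero]
      exact ha
  · -- N(d) ⊓ Pm = P0^k
    apply le_antisymm
    · rintro x ⟨hker, hx⟩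
      rw [Pm] at hx
      obtain ⟨a, ha, b, hb, rfl⟩ := Submodule.mem_sup.mp hx
      obtain ⟨c, hc, rfl⟩ := hb
      have h0 : extd n k (a + koszul n k c) = ((k+1 : ℕ) : ℝ) • c := by
        rw [map_add, extd_P0 n k ha, extd_koszul_P0 n k hc, zero_add]
      rw [LinearMap.mem_ker.mp hker] at h0
      have hc0 : c = 0 := by
        calc c = (((k+1 : ℕ) : ℝ))⁻¹ • ((((k+1 : ℕ) : ℝ)) • c) := by
                rw [smul_smul, inv_mul_cancel₀ hc1, one_smul]
          _ = 0 := by rw [← h0, smul_zero]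
      rw [hc0, map_zero, add_zero]
      exact ha
    · intro x hx
      exact ⟨LinearMap.mem_ker.mpr (extd_P0 n k hx), le_sup_left (α := Submodule ℝ (Form n k)) hx⟩
  · -- P0^k = R(δ)
    apply le_antisymm
    · intro x hx
      refine ⟨kappaDelta n k ((-((n-k : ℕ) : ℝ))⁻¹ • x), ?_, ?_⟩
      · exact le_sup_right (α := Submodule ℝ (Form n (k+1)))
          ⟨(-((n-k : ℕ) : ℝ))⁻¹ • x, Submodule.smul_mem _ _ hx, rfl⟩
      · rw [_root_.map_smul (kappaDelta n k), _root_.map_smul (codiff n k),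
          codiff_kd_P0 n k hx, smul_smul, inv_mul_cancel₀ hc2, one_smul]
    · rw [PsS, Submodule.map_sup, sup_le_iff]
      constructor
      · intro x hx
        obtain ⟨a, ha, rfl⟩ := hx
        rw [codiff_P0 n k ha]
        exact Submodule.zero_mem _
      · intro x hx
        obtain ⟨b, hb, rfl⟩ := hx
        obtain ⟨c, hc, rfl⟩ := hb
        rw [codiff_kd_P0 n k hc]
        exact Submodule.smul_mem _ _ hc

/-- equation (2.4) `eq:localcouple`. For the Whitney spaces on `ℝⁿ`:
`R(d^k, P_1^-Λ^k) = P_0Λ^{k+1} = N(δ_{k+1}, P_1^{*,-}Λ^{k+1})` and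
`N(d^k, P_1^-Λ^k) = P_0Λ^k = R(δ_{k+1}, P_1^{*,-}Λ^{k+1})`. -/
theorem stmt9 (n k : ℕ) (hk : k + 1 ≤ n) :
    Submodule.map (extd n k) (Pm n k) = P0 n (k+1) ∧
      P0 n (k+1) = LinearMap.ker (codiff n k) ⊓ PsS n k ∧
      LinearMap.ker (extd n k) ⊓ Pm n k = P0 n k ∧
      P0 n k = Submodule.map (codiff n k) (PsS n k) := by
  exact stmt9' n k hk
end
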